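/- Remainder estimate: for q = 1/d with |d| ≥ 2 integer, 0 < |t| < 1, and all n, K ∈ ℤ_+, |S_n(q^K t)| < 8 |q|^{(3n^2+n)/2 + 2nK + K}. -/

import Mathlib

open Finset

/-- q-Pochhammer symbol `(a)_n = ∏_{j=0}^{n-1} (1 - a q^j)`. -/
noncomputable def qPoch (q a : ℝ) (n : ℕ) : ℝ := ∏ j ∈ Finset.range n, (1 - a * q ^ j)

/-- q-exponential `E_q(t) = ∏_{k=0}^∞ (1 - q^k t)⁻¹`. -/
noncomputable def qExp (q t : ℝ) : ℝ := ∏' k : ℕ, (1 - q ^ k * t)⁻¹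

/-- q-binomial coefficient. -/
noncomputable def qBinom (q : ℝ) (n k : ℕ) : ℝ :=
  qPoch q q n / (qPoch q q k * qPoch q q (n - k))

/-- Padé numerator polynomial `A_n(t)`. -/
noncomputable def padeA (q : ℝ) (n : ℕ) (t : ℝ) : ℝ :=
  ∑ k ∈ Finset.range (n + 1),
    qBinom q n k * q ^ (k * n) * qPoch q (q ^ (n + 1)) (n - k) * t ^ k

/-- Padé denominator polynomial `B_n(t)`. -/
noncomputable def padeB (q : ℝ) (n : ℕ) (t : ℝ) : ℝ :=
  ∑ k ∈ Finset.range (n + 1),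
    qBinom q n k * q ^ (k * (k - 1) / 2) * qPoch q (q ^ (n + 1)) (n - k) * (-t) ^ k

/-- Padé remainder `S_n(t)`. -/
noncomputable def padeS (q : ℝ) (n : ℕ) (t : ℝ) : ℝ :=
  (-1) ^ n * t ^ (2 * n + 1) * q ^ ((3 * n ^ 2 + n) / 2) *
    (qPoch q q n / qPoch q q (2 * n + 1)) *
    ∑' k : ℕ, qPoch q (q ^ (n + 1)) k * t ^ k / (qPoch q q k * qPoch q (q ^ (2 * n + 2)) k)

lemma qPoch_zero (q a : ℝ) : qPoch q a 0 = 1 := by simp [qPoch]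

lemma qPoch_succ (q a : ℝ) (m : ℕ) : qPoch q a (m+1) = qPoch q a m * (1 - a * q ^ m) :=
  Finset.prod_range_succ _ m

lemma qPoch_add (q a : ℝ) (m k : ℕ) :
    qPoch q a (m + k) = qPoch q a m * qPoch q (a * q ^ m) k := by
  unfold qPoch
  rw [Finset.prod_range_add]
  congr 1
  refine Finset.prod_congr rfl fun j _ => ?_
  rw [pow_add]; ring

lemma qPoch_pos (q a : ℝ) (hq : |q| ≤ 1) (ha : |a| ≤ 1/2) (m : ℕ) : 0 < qPoch q a m := by
  refine Finset.prod_pos fun j _ => ?_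
  have h1 : |a * q ^ j| ≤ 1/2 := by
    rw [abs_mul, abs_pow]
    calc |a| * |q| ^ j ≤ (1/2) * 1 :=
          mul_le_mul ha (pow_le_one₀ (abs_nonneg q) hq) (by positivity) (by norm_num)
      _ = 1/2 := by norm_num
  have := (abs_le.mp h1).2
  linarith

lemma prod_one_sub_ge (x : ℕ → ℝ) (h0 : ∀ j, 0 ≤ x j) (h1 : ∀ j, x j ≤ 1) (k : ℕ) :
    1 - ∑ j ∈ range k, x j ≤ ∏ j ∈ range k, (1 - x j) := by
  induction k with
  | zero => simp
  | succ k ih =>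
    rw [Finset.prod_range_succ, Finset.sum_range_succ]
    have hs : 0 ≤ ∑ j ∈ range k, x j := Finset.sum_nonneg fun j _ => h0 j
    nlinarith [h0 k, h1 k]

lemma qPoch_le_one (q a : ℝ) (hq0 : 0 ≤ q) (hq1 : q ≤ 1) (ha0 : 0 ≤ a) (ha1 : a ≤ 1) (m : ℕ) :
    qPoch q a m ≤ 1 := by
  refine Finset.prod_le_one (fun j _ => ?_) (fun j _ => ?_)
  · have : a * q ^ j ≤ 1 * 1 :=
      mul_le_mul ha1 (pow_le_one₀ hq0 hq1) (by positivity) (by norm_num)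
    linarith
  · have : 0 ≤ a * q ^ j := by positivity
    linarith

lemma qPoch_q_lower_pos (q : ℝ) (h0 : 0 < q) (h2 : q ≤ 1/2) (m : ℕ) :
    1/4 ≤ qPoch q q m := by
  cases m with
  | zero => norm_num [qPoch]
  | succ m =>
    have e : qPoch q q (m+1) = qPoch q q 1 * qPoch q (q * q ^ 1) m := by
      rw [show m + 1 = 1 + m by ring, qPoch_add]
    have h1 : qPoch q q 1 = 1 - q := by simp [qPoch]
    have hgeom : ∑ j ∈ range m, (q * q ^ 1) * q ^ j ≤ 2 * q^2 := by
      have : ∀ j ∈ range m, (q * q ^ 1) * q ^ j ≤ q^2 * (1/2)^j := by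
        intro j _
        have : q ^ j ≤ (1/2) ^ j := pow_le_pow_left₀ h0.le h2 j
        nlinarith [pow_pos h0 j, pow_pos (show (0:ℝ) < 1/2 by norm_num) j, sq_nonneg q]
      calc ∑ j ∈ range m, (q * q ^ 1) * q ^ j ≤ ∑ j ∈ range m, q^2 * (1/2)^j :=
            Finset.sum_le_sum this
        _ = q^2 * ∑ j ∈ range m, (1/2:ℝ)^j := by rw [Finset.mul_sum]
        _ ≤ q^2 * 2 := by
            have : ∑ j ∈ range m, (1/2:ℝ)^j ≤ 2 := by
              have := geom_sum_eq (show (1/2:ℝ) ≠ 1 by norm_num) m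
              rw [this]
              have : (0:ℝ) < (1/2)^m := by positivity
              rw [div_le_iff_of_neg (by norm_num : (1/2:ℝ) - 1 < 0)]
              linarith
            nlinarith [sq_nonneg q]
        _ = 2 * q^2 := by ring
    have hlow : 1 - 2*q^2 ≤ qPoch q (q * q ^ 1) m := by
      have hx0 : ∀ j, 0 ≤ (q * q ^ 1) * q ^ j := fun j => by positivity
      have hx1 : ∀ j, (q * q ^ 1) * q ^ j ≤ 1 := by
        intro j
        have h1 : q ^ j ≤ 1 := pow_le_one₀ h0.le (by linarith)
        nlinarith
      have := prod_one_sub_ge (fun j => (q * q ^ 1) * q ^ j) hx0 hx1 m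
      calc 1 - 2*q^2 ≤ 1 - ∑ j ∈ range m, (q * q ^ 1) * q ^ j := by linarith
        _ ≤ _ := this
    rw [e, h1]
    nlinarith [sq_nonneg (q - 1/2), sq_nonneg q]

section Neg
variable (q : ℝ) (hq : -1/2 ≤ q) (hq0 : q < 0)
include hq hq0

lemma qPoch_even_ge_one : ∀ i, 1 ≤ qPoch q q (2*i) := by
  intro i
  induction i with
  | zero => simp [qPoch]
  | succ i ih =>
    have e : qPoch q q (2*(i+1)) = qPoch q q (2*i) * ((1 - q * q^(2*i)) * (1 - q * q^(2*i+1))) := by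
      rw [show 2*(i+1) = (2*i+1)+1 by ring, qPoch_succ, qPoch_succ]; ring
    rw [e]
    have hq2 : 0 < q^2 := by nlinarith
    have hu0 : 0 < q^(2*i) := by
      have : q^(2*i) = (q^2)^i := by rw [← pow_mul]
      rw [this]; exact pow_pos hq2 i
    have hu1 : q^(2*i) ≤ 1 := by
      have : q^(2*i) = (q^2)^i := by rw [← pow_mul]
      rw [this]; exact pow_le_one₀ (sq_nonneg q) (by nlinarith)
    have hsq : q^2 ≤ 1/4 := by nlinarith
    have h14 : 0 ≤ 1 + q - q^2 * q^(2*i) := by nlinarith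
    have key : 1 ≤ (1 - q * q^(2*i)) * (1 - q * q^(2*i+1)) := by
      have hp : q^(2*i+1) = q * q^(2*i) := pow_succ' q (2*i)
      rw [hp]
      nlinarith [mul_nonneg (mul_nonneg (neg_nonneg.mpr hq0.le) hu0.le) h14]
    nlinarith [qPoch_pos q q (by rw [abs_of_neg hq0]; linarith) (by rw [abs_of_neg hq0]; linarith) (2*i)]

lemma qPoch_ge_one_neg : ∀ m, 1 ≤ qPoch q q m := by
  intro m
  rcases Nat.even_or_odd' m with ⟨i, rfl | rfl⟩
  · exact qPoch_even_ge_one q hq hq0 i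
  · rw [qPoch_succ]
    have h1 := qPoch_even_ge_one q hq hq0 i
    have hodd : q * q^(2*i) ≤ 0 := by
      have hq2 : 0 < q^2 := by nlinarith
      have hu0 : 0 < q^(2*i) := by
        have : q^(2*i) = (q^2)^i := by rw [← pow_mul]
        rw [this]; exact pow_pos hq2 i
      nlinarith
    nlinarith

lemma qPoch_odd_le : ∀ i, qPoch q q (2*i+1) ≤ 1 - q := by
  intro i
  induction i with
  | zero => simp [qPoch]
  | succ i ih =>
    have e : qPoch q q (2*(i+1)+1)
        = qPoch q q (2*i+1) * ((1 - q * q^(2*i+1)) * (1 - q * q^(2*i+2))) := by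
      rw [show 2*(i+1)+1 = (2*i+2)+1 by ring, qPoch_succ, qPoch_succ]
      rw [show 2*i+1+1 = 2*i+2 by ring]; ring
    rw [e]
    have habs : |q| ≤ 1/2 := by rw [abs_of_neg hq0]; linarith
    have hP : 0 < qPoch q q (2*i+1) := qPoch_pos q q (by linarith [abs_nonneg q]) habs _
    have hq2 : 0 < q^2 := by nlinarith
    have hw0 : 0 < q^(2*i+2) := by
      have : q^(2*i+2) = (q^2)^(i+1) := by rw [show 2*i+2=2*(i+1) by ring, ← pow_mul]
      rw [this]; exact pow_pos hq2 (i+1)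
    have hw1 : q^(2*i+2) ≤ 1/4 := by
      have e2 : q^(2*i+2) = (q^2)^(i+1) := by rw [show 2*i+2=2*(i+1) by ring, ← pow_mul]
      have hsq : q^2 ≤ 1/4 := by nlinarith
      calc q^(2*i+2) = (q^2)^(i+1) := e2
        _ ≤ (1/4)^(i+1) := pow_le_pow_left₀ (sq_nonneg q) hsq (i+1)
        _ ≤ (1/4)^1 := pow_le_pow_of_le_one (by norm_num) (by norm_num) (by omega)
        _ = 1/4 := by norm_num
    have key : (1 - q * q^(2*i+1)) * (1 - q * q^(2*i+2)) ≤ 1 := by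
      have hp : q * q^(2*i+1) = q^(2*i+2) := (pow_succ' q (2*i+1)).symm
      rw [hp]
      nlinarith [mul_nonneg hw0.le (show 0 ≤ 1 + q - q * q^(2*i+2) by nlinarith)]
    have key0 : 0 ≤ (1 - q * q^(2*i+1)) * (1 - q * q^(2*i+2)) := by
      have hp : q * q^(2*i+1) = q^(2*i+2) := (pow_succ' q (2*i+1)).symm
      rw [hp]
      have f1 : (0:ℝ) ≤ 1 - q^(2*i+2) := by linarith
      have f2 : (0:ℝ) ≤ 1 - q * q^(2*i+2) := by nlinarith
      exact mul_nonneg f1 f2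
    nlinarith

lemma qPoch_le_neg : ∀ m, qPoch q q m ≤ 3/2 := by
  intro m
  have h32 : 1 - q ≤ 3/2 := by linarith
  rcases Nat.even_or_odd' m with ⟨i, rfl | rfl⟩
  · cases i with
    | zero => norm_num [qPoch]
    | succ i =>
      have e : qPoch q q (2*(i+1)) = qPoch q q (2*i+1) * (1 - q * q^(2*i+1)) := by
        rw [show 2*(i+1) = (2*i+1)+1 by ring, qPoch_succ]
      rw [e]
      have habs : |q| ≤ 1/2 := by rw [abs_of_neg hq0]; linarith
      have hP : 0 < qPoch q q (2*i+1) := qPoch_pos q q (by linarith [abs_nonneg q]) habs _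
      have hPle := qPoch_odd_le q hq hq0 i
      have hq2 : 0 < q^2 := by nlinarith
      have hw0 : 0 < q^(2*i+2) := by
        have : q^(2*i+2) = (q^2)^(i+1) := by rw [show 2*i+2=2*(i+1) by ring, ← pow_mul]
        rw [this]; exact pow_pos hq2 (i+1)
      have hp : q * q^(2*i+1) = q^(2*i+2) := (pow_succ' q (2*i+1)).symm
      rw [hp]
      nlinarith
  · calc qPoch q q (2*i+1) ≤ 1 - q := qPoch_odd_le q hq hq0 i
      _ ≤ 3/2 := h32
end Neg

lemma main_bound (q : ℝ) (hq0 : q ≠ 0) (hq2 : |q| ≤ 1/2) (a b c : ℕ) :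
    qPoch q q (a + b) ≤ 4 * (qPoch q q a * qPoch q q c) := by
  have hq1 : |q| ≤ 1 := by linarith
  rcases lt_or_gt_of_ne hq0 with hneg | hpos
  · have h1 : -1/2 ≤ q := by have := (abs_le.mp hq2).1; linarith
    have hA := qPoch_ge_one_neg q h1 hneg a
    have hC := qPoch_ge_one_neg q h1 hneg c
    have hU := qPoch_le_neg q h1 hneg (a + b)
    nlinarith
  · have hle : q ≤ 1/2 := by have := (abs_le.mp hq2).2; linarith
    have hA : 0 < qPoch q q a := qPoch_pos q q hq1 hq2 a
    have hC : 1/4 ≤ qPoch q q c := qPoch_q_lower_pos q hpos hle c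
    have hsplit : qPoch q q (a + b) = qPoch q q a * qPoch q (q * q ^ a) b := qPoch_add q q a b
    have hone : qPoch q (q * q ^ a) b ≤ 1 := by
      refine qPoch_le_one q _ hpos.le (by linarith) (by positivity) ?_ b
      have : q ^ a ≤ 1 := pow_le_one₀ hpos.le (by linarith)
      nlinarith
    rw [hsplit]
    nlinarith

/-- remainder estimate `|S_n(q^K t)| < 8 |q|^{(3n²+n)/2 + 2nK + K}`. -/
theorem remainder_estimate (d : ℤ) (hd : 2 ≤ |d|) (t : ℝ) (ht0 : 0 < |t|) (ht1 : |t| < 1)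
    (n K : ℕ) (hn : 1 ≤ n) (hK : 1 ≤ K) :
    |padeS (1 / (d : ℝ)) n ((1 / (d : ℝ)) ^ K * t)| <
      8 * |1 / (d : ℝ)| ^ ((3 * n ^ 2 + n) / 2 + 2 * n * K + K) := by

  set q : ℝ := 1 / (d : ℝ) with hqdef
  have hd2 : (2:ℝ) ≤ |(d:ℝ)| := by
    rw [← Int.cast_abs]; exact_mod_cast hd
  have hdpos : (0:ℝ) < |(d:ℝ)| := by linarith
  have hq2 : |q| ≤ 1/2 := by
    rw [hqdef, abs_div, abs_one, div_le_iff₀ hdpos]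
    linarith
  have hq0 : q ≠ 0 := by
    rw [hqdef]
    have : (d:ℝ) ≠ 0 := by intro h; rw [h] at hdpos; simp at hdpos
    simp [this]
  have hq1 : |q| ≤ 1 := by linarith
  have hqa : (0:ℝ) < |q| := abs_pos.mpr hq0
  set s : ℝ := q ^ K * t with hsdef
  have hsabs : |s| = |q| ^ K * |t| := by rw [hsdef, abs_mul, abs_pow]
  have hpowK : |q| ^ K ≤ 1/2 := by
    calc |q| ^ K ≤ |q| ^ 1 := pow_le_pow_of_le_one (abs_nonneg q) hq1 hK
      _ = |q| := pow_one _
      _ ≤ 1/2 := hq2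
  have hsK : |s| < |q| ^ K := by
    rw [hsabs]
    have : (0:ℝ) < |q| ^ K := pow_pos hqa K
    nlinarith
  have hs12 : |s| < 1/2 := lt_of_lt_of_le hsK hpowK
  have hs1 : |s| < 1 := by linarith
  have hs0 : 0 ≤ |s| := abs_nonneg s
  -- pointwise bound
  set R : ℝ := qPoch q q n / qPoch q q (2 * n + 1) with hRdef
  set f : ℕ → ℝ := fun k =>
    qPoch q (q ^ (n + 1)) k * s ^ k / (qPoch q q k * qPoch q (q ^ (2 * n + 2)) k) with hfdef
  have hpow_half : ∀ m : ℕ, 1 ≤ m → |q ^ m| ≤ 1/2 := by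
    intro m hm
    rw [abs_pow]
    calc |q| ^ m ≤ |q| ^ 1 := pow_le_pow_of_le_one (abs_nonneg q) hq1 hm
      _ ≤ 1/2 := by rw [pow_one]; exact hq2
  have hb : ∀ k, |R * f k| ≤ 4 * |s| ^ k := by
    intro k
    have e1 : qPoch q q n * qPoch q (q ^ (n + 1)) k = qPoch q q (n + k) := by
      rw [qPoch_add q q n k, ← pow_succ']
    have e2 : qPoch q q (2 * n + 1) * qPoch q (q ^ (2 * n + 2)) k = qPoch q q (2 * n + 1 + k) := by
      rw [qPoch_add q q (2 * n + 1) k, ← pow_succ']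
    have p1 : 0 < qPoch q q k := qPoch_pos q q hq1 hq2 k
    have p2 : 0 < qPoch q q (2 * n + 1) := qPoch_pos q q hq1 hq2 _
    have p3 : 0 < qPoch q (q ^ (2 * n + 2)) k := qPoch_pos q _ hq1 (hpow_half _ (by omega)) k
    have p4 : 0 < qPoch q q (2 * n + 1 + k) := qPoch_pos q q hq1 hq2 _
    have p5 : 0 < qPoch q q (n + k) := qPoch_pos q q hq1 hq2 _
    have erw : R * f k = qPoch q q (n + k) * s ^ k / (qPoch q q k * qPoch q q (2 * n + 1 + k)) := by
      rw [hRdef, hfdef, ← e1, ← e2]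
      field_simp
    rw [erw, abs_div, abs_mul, abs_mul, abs_pow, abs_of_pos p5, abs_of_pos p1, abs_of_pos p4]
    rw [div_le_iff₀ (by positivity)]
    have hm : qPoch q q (n + k) ≤ 4 * (qPoch q q k * qPoch q q (2 * n + 1 + k)) := by
      have := main_bound q hq0 hq2 k n (2 * n + 1 + k)
      rwa [add_comm k n] at this
    have hp : (0:ℝ) ≤ |s| ^ k := by positivity
    nlinarith
  have hgsum : Summable fun k : ℕ => 4 * |s| ^ k :=
    (summable_geometric_of_lt_one hs0 hs1).mul_left 4
  have hsum : Summable fun k => R * f k :=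
    Summable.of_norm_bounded hgsum (by intro k; rw [Real.norm_eq_abs]; exact hb k)
  have hsumabs : Summable fun k => |R * f k| := by
    apply Summable.of_nonneg_of_le (fun k => abs_nonneg _) hb hgsum
  have htsum : |∑' k, R * f k| ≤ 4 * (1 - |s|)⁻¹ := by
    calc |∑' k, R * f k| ≤ ∑' k, |R * f k| := by
          have hs' : Summable fun k => ‖R * f k‖ := by
            simp only [Real.norm_eq_abs]; exact hsumabs
          have := norm_tsum_le_tsum_norm hs'
          simp only [Real.norm_eq_abs] at this
          exact this
      _ ≤ ∑' k : ℕ, 4 * |s| ^ k := Summable.tsum_le_tsum hb hsumabs hgsum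
      _ = 4 * ∑' k : ℕ, |s| ^ k := by rw [tsum_mul_left]
      _ = 4 * (1 - |s|)⁻¹ := by rw [tsum_geometric_of_lt_one hs0 hs1]
  have hRT : R * ∑' k, f k = ∑' k, R * f k := by rw [tsum_mul_left]
  -- assemble
  have habs : |padeS q n s| = |s| ^ (2*n+1) * |q| ^ ((3*n^2+n)/2) * |R * ∑' k, f k| := by
    unfold padeS
    rw [hRdef, hfdef]
    rw [show (-1:ℝ) ^ n * s ^ (2*n+1) * q ^ ((3*n^2+n)/2) *
        (qPoch q q n / qPoch q q (2*n+1)) *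
        (∑' k : ℕ, qPoch q (q^(n+1)) k * s ^ k / (qPoch q q k * qPoch q (q^(2*n+2)) k))
        = (-1:ℝ) ^ n * (s ^ (2*n+1) * (q ^ ((3*n^2+n)/2) *
          ((qPoch q q n / qPoch q q (2*n+1)) *
          ∑' k : ℕ, qPoch q (q^(n+1)) k * s ^ k / (qPoch q q k * qPoch q (q^(2*n+2)) k)))) by ring]
    rw [abs_mul, abs_mul, abs_mul, abs_pow, abs_neg, abs_one, one_pow, one_mul, abs_pow, abs_pow]
    ring
  have hexp : |s| ^ (2*n+1) = |q| ^ (2*n*K + K) * |t| ^ (2*n+1) := by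
    rw [hsabs, mul_pow, ← pow_mul]
    congr 2
    ring
  have hfinal : |padeS q n s| ≤ |q| ^ ((3*n^2+n)/2 + 2*n*K + K) * (|t| ^ (2*n+1) * (4 * (1 - |s|)⁻¹)) := by
    rw [habs, hexp, hRT]
    have hqe : |q| ^ ((3*n^2+n)/2 + 2*n*K + K) = |q| ^ (2*n*K+K) * |q| ^ ((3*n^2+n)/2) := by
      rw [← pow_add]; congr 1; ring
    rw [hqe]
    have h1 : (0:ℝ) ≤ |q| ^ (2*n*K+K) * |q| ^ ((3*n^2+n)/2) * |t| ^ (2*n+1) := by positivity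
    calc |q| ^ (2*n*K+K) * |t| ^ (2*n+1) * |q| ^ ((3*n^2+n)/2) * |∑' k, R * f k|
        ≤ |q| ^ (2*n*K+K) * |t| ^ (2*n+1) * |q| ^ ((3*n^2+n)/2) * (4 * (1 - |s|)⁻¹) := by
          apply mul_le_mul_of_nonneg_left htsum (by positivity)
      _ = |q| ^ (2*n*K+K) * |q| ^ ((3*n^2+n)/2) * (|t| ^ (2*n+1) * (4 * (1 - |s|)⁻¹)) := by ring
  have hnum : |t| ^ (2*n+1) * (4 * (1 - |s|)⁻¹) < 8 := by
    have ht : |t| ^ (2*n+1) < 1 := pow_lt_one₀ (abs_nonneg t) ht1 (by omega)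
    have hinv : (1 - |s|)⁻¹ ≤ 2 := by
      rw [inv_le_comm₀ (by linarith) (by norm_num)]
      linarith
    have hpos : (0:ℝ) < (1 - |s|)⁻¹ := by
      rw [inv_pos]; linarith
    have h48 : 4 * (1 - |s|)⁻¹ ≤ 8 := by linarith
    have htnn : (0:ℝ) ≤ |t| ^ (2*n+1) := by positivity
    nlinarith
  calc |padeS q n s| ≤ |q| ^ ((3*n^2+n)/2 + 2*n*K + K) * (|t| ^ (2*n+1) * (4 * (1 - |s|)⁻¹)) := hfinal
    _ < |q| ^ ((3*n^2+n)/2 + 2*n*K + K) * 8 := by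
        exact mul_lt_mul_of_pos_left hnum (pow_pos hqa _)
    _ = 8 * |q| ^ ((3*n^2+n)/2 + 2*n*K + K) := by ring
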